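/- arXiv:2007.00363 — 3 statements merged into one kernel-verified Lean document; each statement's English description precedes it below -/
import Mathlib

section
/- Under the assumptions of the complete-DFT covariance identity, if additionally the autocovariance satisfies ∑_{r∈ℤ} |r·c(r)| < ∞, then |E[|J_n(ω)|²] − f(ω)| ≤ (1/n) ∑_{r∈ℤ} |r·c(r)| + ∑_{|r| ≥ n} |c(r)|, and hence E[|J_n(ω)|²] = f(ω) + O(1/n) uniformly in ω. -/
open MeasureTheory

private lemma count_lemma' (n : ℕ) (r : ℤ) :
    ((Finset.Icc (1:ℤ) (n:ℤ)).filter (fun s => s + r ∈ Finset.Icc (1:ℤ) (n:ℤ))).card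
      = ((n:ℤ) - r.natAbs).toNat := by
  have h : (Finset.Icc (1:ℤ) (n:ℤ)).filter (fun s => s + r ∈ Finset.Icc (1:ℤ) (n:ℤ))
      = Finset.Icc (max 1 (1 - r)) (min (n:ℤ) ((n:ℤ) - r)) := by
    ext s; simp [Finset.mem_Icc, Finset.mem_filter]; omega
  rw [h, Int.card_Icc]
  omega

private lemma regroup' (n : ℕ) (h : ℤ → ℂ) :
    ∑ s ∈ Finset.Icc (1:ℤ) (n:ℤ), ∑ t ∈ Finset.Icc (1:ℤ) (n:ℤ), h (t - s)
      = ∑ r ∈ Finset.Icc (1 - (n:ℤ)) ((n:ℤ) - 1), (((n:ℤ) - r.natAbs).toNat) • h r := by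
  have step1 : ∀ s ∈ Finset.Icc (1:ℤ) (n:ℤ),
      ∑ t ∈ Finset.Icc (1:ℤ) (n:ℤ), h (t - s)
        = ∑ r ∈ Finset.Icc (1 - (n:ℤ)) ((n:ℤ) - 1),
            (if s + r ∈ Finset.Icc (1:ℤ) (n:ℤ) then h r else 0) := by
    intro s hs
    rw [Finset.sum_ite, Finset.sum_const_zero, add_zero]
    apply Finset.sum_nbij' (i := fun t => t - s) (j := fun r => r + s)
    · intro t ht
      simp only [Finset.mem_filter, Finset.mem_Icc] at *
      omega
    · intro r hr
      simp only [Finset.mem_filter, Finset.mem_Icc] at *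
      omega
    · intro t _; ring
    · intro r _; ring
    · intro t _; rfl
  rw [Finset.sum_congr rfl step1, Finset.sum_comm]
  refine Finset.sum_congr rfl (fun r _ => ?_)
  rw [Finset.sum_ite, Finset.sum_const_zero, add_zero, Finset.sum_const, count_lemma']

private lemma normsq_sum' (a : ℤ → ℝ) (ω : ℝ) (I : Finset ℤ) :
    ‖∑ t ∈ I, (a t:ℂ) * Complex.exp (Complex.I * (t:ℂ) * (ω:ℂ))‖^2
      = ∑ t ∈ I, ∑ s ∈ I, a t * a s * Real.cos (((t - s : ℤ):ℝ) * ω) := by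
  have hz : ∀ z : ℂ, ‖z‖^2 = (z * (starRingEnd ℂ) z).re := by
    intro z
    rw [Complex.mul_conj, Complex.ofReal_re, ← Complex.sq_norm]
  rw [hz, map_sum, Finset.sum_mul_sum]
  rw [Complex.re_sum]
  refine Finset.sum_congr rfl (fun t _ => ?_)
  rw [Complex.re_sum]
  refine Finset.sum_congr rfl (fun s _ => ?_)
  have h1 : (a t:ℂ) * Complex.exp (Complex.I * (t:ℂ) * (ω:ℂ)) *
      ((starRingEnd ℂ) ((a s:ℂ) * Complex.exp (Complex.I * (s:ℂ) * (ω:ℂ))))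
      = ((a t * a s : ℝ):ℂ) * Complex.exp ((((t - s : ℤ):ℝ) * ω : ℝ) * Complex.I) := by
    rw [map_mul, ← Complex.exp_conj, Complex.conj_ofReal]
    rw [mul_mul_mul_comm, ← Complex.exp_add]
    congr 1
    · push_cast; ring
    · congr 1
      simp only [map_mul, Complex.conj_I, Complex.conj_ofReal, map_intCast]
      push_cast
      ring
  rw [h1, Complex.re_ofReal_mul, Complex.exp_ofReal_mul_I_re]

private lemma sym_sum' (I : Finset ℤ) (F h : ℤ → ℂ) (hFh : ∀ r, h r + h (-r) = 2 * F r) :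
    ∑ s ∈ I, ∑ t ∈ I, F (t - s) = ∑ s ∈ I, ∑ t ∈ I, h (t - s) := by
  have hswap : ∑ s ∈ I, ∑ t ∈ I, h (t - s) = ∑ s ∈ I, ∑ t ∈ I, h (s - t) :=
    Finset.sum_comm
  have h2 : (2:ℂ) * (∑ s ∈ I, ∑ t ∈ I, h (t - s))
      = (2:ℂ) * ∑ s ∈ I, ∑ t ∈ I, F (t - s) := by
    calc (2:ℂ) * (∑ s ∈ I, ∑ t ∈ I, h (t - s))
        = (∑ s ∈ I, ∑ t ∈ I, h (t - s)) + ∑ s ∈ I, ∑ t ∈ I, h (s - t) := by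
          rw [← hswap]; ring
      _ = ∑ s ∈ I, ∑ t ∈ I, (h (t - s) + h (s - t)) := by
          rw [← Finset.sum_add_distrib]
          exact Finset.sum_congr rfl (fun s _ => (Finset.sum_add_distrib).symm)
      _ = ∑ s ∈ I, ∑ t ∈ I, (2:ℂ) * F (t - s) := by
          refine Finset.sum_congr rfl (fun s _ => Finset.sum_congr rfl (fun t _ => ?_))
          rw [← hFh (t - s), neg_sub]
      _ = (2:ℂ) * ∑ s ∈ I, ∑ t ∈ I, F (t - s) := by
          simp [Finset.mul_sum]
  exact (mul_left_cancel₀ two_ne_zero h2).symm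

/-- Bias of the regular periodogram: under `∑_r |r c(r)| < ∞`,
`|E[|J_n(ω)|²] − f(ω)| ≤ n⁻¹ ∑_r |r c(r)| + ∑_{|r| ≥ n} |c(r)|`, and hence
`E[|J_n(ω)|²] = f(ω) + O(1/n)` uniformly in `ω`. -/
theorem stmt_4 {Ω : Type*} [MeasurableSpace Ω] (μ : Measure Ω) [IsProbabilityMeasure μ]
    (X : ℤ → Ω → ℝ) (c : ℤ → ℝ)
    (hL2 : ∀ t : ℤ, MemLp (X t) 2 μ)
    (hmean : ∀ t : ℤ, ∫ ω, X t ω ∂μ = 0)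
    (hcov : ∀ s t : ℤ, ∫ ω, X s ω * X t ω ∂μ = c (t - s))
    (hsum : Summable fun r : ℤ => (r.natAbs : ℝ) * |c r|)
    (J : ℕ → ℝ → Ω → ℂ)
    (hJ : ∀ (n : ℕ) (ω : ℝ), J n ω = fun ω' => (Real.sqrt n : ℂ)⁻¹ *
      ∑ t ∈ Finset.Icc (1 : ℤ) (n : ℤ),
        (X t ω' : ℂ) * Complex.exp (Complex.I * (t : ℂ) * (ω : ℂ)))
    (f : ℝ → ℂ)
    (hf : ∀ ω : ℝ, f ω = ∑' r : ℤ,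
      (c r : ℂ) * Complex.exp (Complex.I * (r : ℂ) * (ω : ℂ))) :
    (∀ n : ℕ, 1 ≤ n → ∀ ω : ℝ,
      ‖((∫ ω', ‖J n ω ω'‖ ^ 2 ∂μ : ℝ) : ℂ) - f ω‖ ≤
        (1 / n) * (∑' r : ℤ, (r.natAbs : ℝ) * |c r|) +
          ∑' r : ℤ, (if (n : ℤ) ≤ |r| then |c r| else 0)) ∧
    (∃ C : ℝ, ∀ n : ℕ, 1 ≤ n → ∀ ω : ℝ,
      ‖((∫ ω', ‖J n ω ω'‖ ^ 2 ∂μ : ℝ) : ℂ) - f ω‖ ≤ C / n) := by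
  -- c is even
  have hceven : ∀ r : ℤ, c (-r) = c r := by
    intro r
    have h1 := hcov r 0
    have h2 := hcov 0 r
    simp only [zero_sub, sub_zero] at h1 h2
    rw [← h1, ← h2]
    exact integral_congr_ae (Filter.Eventually.of_forall (fun ω => mul_comm _ _))
  -- |c| is summable
  have hcabs : Summable (fun r : ℤ => |c r|) := by
    have hb : Summable (fun r : ℤ => (r.natAbs : ℝ) * |c r| + (if r = 0 then |c 0| else 0)) := by
      refine hsum.add ?_
      refine summable_of_ne_finset_zero (s := {0}) (fun r hr => ?_)
      simp only [Finset.mem_singleton] at hr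
      simp [hr]
    refine Summable.of_nonneg_of_le (fun r => abs_nonneg _) (fun r => ?_) hb
    rcases eq_or_ne r 0 with h | h
    · simp [h]
    · rw [if_neg h, add_zero]
      have : (1:ℝ) ≤ (r.natAbs : ℝ) := by
        have : 1 ≤ r.natAbs := by omega
        exact_mod_cast this
      nlinarith [abs_nonneg (c r)]
  -- the main estimate
  have main : ∀ n : ℕ, 1 ≤ n → ∀ ω : ℝ,
      ‖((∫ ω', ‖J n ω ω'‖ ^ 2 ∂μ : ℝ) : ℂ) - f ω‖ ≤
        (1 / n) * (∑' r : ℤ, (r.natAbs : ℝ) * |c r|) +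
          ∑' r : ℤ, (if (n : ℤ) ≤ |r| then |c r| else 0) := by
    intro n hn ω
    set I : Finset ℤ := Finset.Icc (1:ℤ) (n:ℤ) with hI
    set T : Finset ℤ := Finset.Icc (1 - (n:ℤ)) ((n:ℤ) - 1) with hT
    set h : ℤ → ℂ := fun r => (c r : ℂ) * Complex.exp (Complex.I * (r:ℂ) * (ω:ℂ)) with hh_def
    have hnR : (0:ℝ) < n := by exact_mod_cast hn
    have hnC : (n:ℂ) ≠ 0 := by exact_mod_cast (Nat.one_le_iff_ne_zero.mp hn)
    -- norm of h
    have hnormh : ∀ r : ℤ, ‖h r‖ = |c r| := by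
      intro r
      have he : Complex.I * (r:ℂ) * (ω:ℂ) = (((r:ℝ) * ω : ℝ) : ℂ) * Complex.I := by
        push_cast; ring
      rw [hh_def]
      simp only [norm_mul, he, Complex.norm_exp_ofReal_mul_I,
        Complex.norm_real, Real.norm_eq_abs, mul_one]
    have hhsum : Summable h := by
      refine Summable.of_norm ?_
      simpa only [hnormh] using hcabs
    -- step 1: compute the integral
    have hmul : ∀ t s : ℤ, Integrable (fun ω' => X t ω' * X s ω') μ := by
      intro t s
      have h1 := ((hL2 t).add (hL2 s)).integrable_sq
      have h2 := (hL2 t).integrable_sq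
      have h3 := (hL2 s).integrable_sq
      have h4 := ((h1.sub h2).sub h3).const_mul (1/2 : ℝ)
      refine h4.congr ?_
      filter_upwards with ω'
      simp only [Pi.add_apply, Pi.sub_apply]
      ring
    have hE : (∫ ω', ‖J n ω ω'‖ ^ 2 ∂μ : ℝ)
        = (n:ℝ)⁻¹ * ∑ t ∈ I, ∑ s ∈ I,
            (c (s - t) * Real.cos (((s - t : ℤ):ℝ) * ω)) := by
      have hfun : (fun ω' => ‖J n ω ω'‖ ^ 2)
          = fun ω' => (n:ℝ)⁻¹ * ∑ t ∈ I, ∑ s ∈ I,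
              X t ω' * X s ω' * Real.cos (((t - s : ℤ):ℝ) * ω) := by
        rw [hJ]
        funext ω'
        rw [norm_mul, mul_pow, norm_inv, Complex.norm_real, Real.norm_eq_abs,
          abs_of_nonneg (Real.sqrt_nonneg _), inv_pow,
          Real.sq_sqrt (by positivity : (0:ℝ) ≤ (n:ℝ)),
          normsq_sum' (fun t => X t ω') ω I]
      rw [hfun, integral_const_mul]
      congr 1
      have hint : ∀ t s : ℤ, Integrable
          (fun ω' => X t ω' * X s ω' * Real.cos (((t - s : ℤ):ℝ) * ω)) μ :=
        fun t s => (hmul t s).mul_const _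
      rw [integral_finset_sum _ (fun t _ => integrable_finset_sum _ (fun s _ => hint t s))]
      refine Finset.sum_congr rfl (fun t _ => ?_)
      rw [integral_finset_sum _ (fun s _ => hint t s)]
      refine Finset.sum_congr rfl (fun s _ => ?_)
      rw [integral_mul_const, hcov t s]
      congr 1
      rw [show (((t - s : ℤ):ℝ) * ω) = -(((s - t : ℤ):ℝ) * ω) by push_cast; ring,
        Real.cos_neg]
    -- step 2: complexify and regroup
    have hFh : ∀ r : ℤ, h r + h (-r)
        = 2 * ((c r * Real.cos (((r : ℤ):ℝ) * ω) : ℝ) : ℂ) := by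
      intro r
      have hexp : Complex.exp (Complex.I * ((-r : ℤ):ℂ) * (ω:ℂ))
          = Complex.exp (-((((r:ℝ) * ω : ℝ):ℂ)) * Complex.I) := by
        congr 1; push_cast; ring
      have hexp2 : Complex.exp (Complex.I * ((r : ℤ):ℂ) * (ω:ℂ))
          = Complex.exp (((((r:ℝ) * ω : ℝ):ℂ)) * Complex.I) := by
        congr 1; push_cast; ring
      rw [hh_def]
      simp only [hexp, hexp2, hceven r]
      rw [← mul_add, ← Complex.two_cos, ← Complex.ofReal_cos]
      push_cast
      ring
    have hEC : ((∫ ω', ‖J n ω ω'‖ ^ 2 ∂μ : ℝ) : ℂ)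
        = (n:ℂ)⁻¹ * ∑ r ∈ T, (((n:ℤ) - r.natAbs).toNat) • h r := by
      rw [hE, ← regroup' n h,
        ← sym_sum' I (fun r => ((c r * Real.cos (((r : ℤ):ℝ) * ω) : ℝ) : ℂ)) h hFh,
        Complex.ofReal_mul, Complex.ofReal_inv, Complex.ofReal_natCast]
      congr 1
      norm_cast
    rw [hEC, hf]
    have hfold : (∑' r : ℤ, (c r : ℂ) * Complex.exp (Complex.I * (r:ℂ) * (ω:ℂ)))
        = ∑' r : ℤ, h r := rfl
    rw [hfold, ← hhsum.sum_add_tsum_compl (s := T)]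
    have hrw : (n:ℂ)⁻¹ * (∑ r ∈ T, (((n:ℤ) - r.natAbs).toNat) • h r)
        - ((∑ r ∈ T, h r) + ∑' (r : ((T : Set ℤ)ᶜ : Set ℤ)), h r)
        = (∑ r ∈ T, ((((n:ℤ) - r.natAbs).toNat : ℂ) / n - 1) * h r)
          - ∑' (r : ((T : Set ℤ)ᶜ : Set ℤ)), h r := by
      rw [Finset.mul_sum, sub_add_eq_sub_sub]
      congr 1
      rw [← Finset.sum_sub_distrib]
      refine Finset.sum_congr rfl (fun r _ => ?_)
      rw [nsmul_eq_mul]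
      field_simp
    rw [hrw]
    refine le_trans (norm_sub_le _ _) (add_le_add ?_ ?_)
    · -- finite part
      refine le_trans (norm_sum_le _ _) ?_
      have hterm : ∀ r ∈ T, ‖((((n:ℤ) - r.natAbs).toNat : ℂ) / n - 1) * h r‖
          = (1/(n:ℝ)) * ((r.natAbs : ℝ) * |c r|) := by
        intro r hr
        have hle : (r.natAbs : ℤ) ≤ (n:ℤ) := by
          rw [hT, Finset.mem_Icc] at hr; omega
        have hcast : ((((n:ℤ) - r.natAbs).toNat : ℕ) : ℂ) = (n:ℂ) - (r.natAbs : ℂ) := by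
          have h0 : ((((n:ℤ) - r.natAbs).toNat : ℕ) : ℤ) = (n:ℤ) - r.natAbs :=
            Int.toNat_of_nonneg (by omega)
          exact_mod_cast h0
        rw [hcast]
        have hcoef : ((n:ℂ) - (r.natAbs:ℂ)) / n - 1 = -((r.natAbs : ℂ) / n) := by
          field_simp
          ring
        rw [hcoef, norm_mul, norm_neg, norm_div, hnormh r]
        simp only [Complex.norm_natCast]
        ring
      rw [Finset.sum_congr rfl hterm, ← Finset.mul_sum]
      have hle : ∑ r ∈ T, (r.natAbs : ℝ) * |c r| ≤ ∑' r : ℤ, (r.natAbs : ℝ) * |c r| :=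
        Summable.sum_le_tsum T (fun r _ => by positivity) hsum
      have h1n : (0:ℝ) ≤ 1/(n:ℝ) := by positivity
      have := mul_le_mul_of_nonneg_left hle h1n
      simpa using this
    · -- tail part
      refine le_trans (norm_tsum_le_tsum_norm ?_) ?_
      · exact (hcabs.subtype _).congr (fun r => (hnormh r.1).symm)
      · refine le_of_eq ?_
        rw [tsum_congr (fun r : ((T : Set ℤ)ᶜ : Set ℤ) => hnormh r.1)]
        refine Eq.trans (tsum_subtype (((T : Set ℤ))ᶜ) (fun r => |c r|)) ?_
        refine tsum_congr (fun r => ?_)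
        rw [Set.indicator_apply]
        have hmemiff : r ∈ ((T : Set ℤ)ᶜ : Set ℤ) ↔ (n:ℤ) ≤ |r| := by
          simp only [Set.mem_compl_iff, hT, Finset.coe_Icc, Set.mem_Icc, not_and_or,
            not_le, Int.abs_eq_natAbs]
          omega
        by_cases hr : (n:ℤ) ≤ |r|
        · rw [if_pos (hmemiff.mpr hr), if_pos hr]
        · rw [if_neg (fun hm => hr (hmemiff.mp hm)), if_neg hr]
  refine ⟨main, ⟨2 * ∑' r : ℤ, (r.natAbs : ℝ) * |c r|, ?_⟩⟩
  intro n hn ω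
  have hnR : (0:ℝ) < n := by exact_mod_cast hn
  refine le_trans (main n hn ω) ?_
  have hbound : ∀ r : ℤ, (if (n:ℤ) ≤ |r| then |c r| else 0)
      ≤ 1/(n:ℝ) * ((r.natAbs : ℝ) * |c r|) := by
    intro r
    by_cases hr : (n:ℤ) ≤ |r|
    · rw [if_pos hr]
      have h1 : (n:ℝ) ≤ (r.natAbs : ℝ) := by
        rw [Int.abs_eq_natAbs] at hr
        exact_mod_cast hr
      have h2 : (1:ℝ) ≤ 1/(n:ℝ) * (r.natAbs : ℝ) := by
        rw [one_div, inv_mul_eq_div, le_div_iff₀ hnR]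
        simpa using h1
      nlinarith [abs_nonneg (c r)]
    · rw [if_neg hr]
      positivity
  have hitesum : Summable (fun r : ℤ => if (n:ℤ) ≤ |r| then |c r| else 0) := by
    refine Summable.of_nonneg_of_le (fun r => ?_) hbound (hsum.mul_left (1/(n:ℝ)))
    by_cases hr : (n:ℤ) ≤ |r| <;> simp [hr, abs_nonneg]
  have htail : ∑' r : ℤ, (if (n:ℤ) ≤ |r| then |c r| else 0)
      ≤ (1/(n:ℝ)) * ∑' r : ℤ, (r.natAbs : ℝ) * |c r| := by
    rw [← tsum_mul_left]
    exact Summable.tsum_le_tsum hbound hitesum (hsum.mul_left _)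
  calc (1/(n:ℝ)) * (∑' r : ℤ, (r.natAbs : ℝ) * |c r|)
        + ∑' r : ℤ, (if (n:ℤ) ≤ |r| then |c r| else 0)
      ≤ (1/(n:ℝ)) * (∑' r : ℤ, (r.natAbs : ℝ) * |c r|)
        + (1/(n:ℝ)) * ∑' r : ℤ, (r.natAbs : ℝ) * |c r| := by linarith
    _ = (2 * ∑' r : ℤ, (r.natAbs : ℝ) * |c r|) / n := by ring
end

section
/- Let X be a mean-zero second-order stationary process with summable autocovariance c and spectral density f(ω) = ∑_r c(r) e^{irω}. Let h_{1,n}, …, h_{n,n} be real weights with ∑_{t=1}^n h_{t,n} = n, and set J_{h,n}(ω) = n^{-1/2} ∑_{t=1}^n h_{t,n} X_t e^{itω}. Then, with J̃_n(ω) the complete DFT (regular DFT plus the L²-convergent predictive DFT built from projections onto span{X_1,…,X_n}), E[ J̃_n(ω) · conj(J_{h,n}(ω)) ] = f(ω). More generally, without the constraint, E[ J̃_n(ω) · conj(J_{h,n}(ω)) ] = (n^{-1} ∑_{t=1}^n h_{t,n}) · f(ω). -/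
open MeasureTheory Filter

section Aux
variable {Ω : Type*} [MeasurableSpace Ω] {μ : Measure Ω}

lemma aux_mul_int {f g : Ω → ℂ} (hf : MemLp f 2 μ) (hg : MemLp g 2 μ) :
    Integrable (fun x => f x * g x) μ := by
  rw [← memLp_one_iff_integrable]
  have := hg.smul (φ := f) (p := 2) (r := 1) hf
    (hpqr := ⟨by rw [inv_one, ENNReal.inv_two_add_inv_two]⟩)
  exact this

lemma aux_mul_int_real {f g : Ω → ℝ} (hf : MemLp f 2 μ) (hg : MemLp g 2 μ) :
    Integrable (fun x => f x * g x) μ := by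
  rw [← memLp_one_iff_integrable]
  have := hg.smul (φ := f) (p := 2) (r := 1) hf
    (hpqr := ⟨by rw [inv_one, ENNReal.inv_two_add_inv_two]⟩)
  exact this

lemma aux_conj {f : Ω → ℂ} (hf : MemLp f 2 μ) :
    MemLp (fun x => (starRingEnd ℂ) (f x)) 2 μ :=
  hf.of_le_mul (c := 1) (RCLike.continuous_conj.comp_aestronglyMeasurable hf.1)
    (Eventually.of_forall fun x => by simp)

lemma aux_holder {f g : Ω → ℂ} (hf : MemLp f 2 μ) (hg : MemLp g 2 μ) :
    ‖∫ x, f x * g x ∂μ‖ ≤ (eLpNorm f 2 μ).toReal * (eLpNorm g 2 μ).toReal := by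
  have h2 : (ENNReal.ofReal (2:ℝ)) = 2 := by norm_num
  have hconj : Real.HolderConjugate 2 2 := by constructor <;> norm_num
  have hf2 : MemLp f (ENNReal.ofReal (2:ℝ)) μ := h2 ▸ hf
  have hg2 : MemLp g (ENNReal.ofReal (2:ℝ)) μ := h2 ▸ hg
  have key := integral_mul_norm_le_Lp_mul_Lq (μ := μ) hconj hf2 hg2
  have hfe := hf.eLpNorm_eq_integral_rpow_norm two_ne_zero ENNReal.ofNat_ne_top
  have hge := hg.eLpNorm_eq_integral_rpow_norm two_ne_zero ENNReal.ofNat_ne_top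
  have h1 : ‖∫ x, f x * g x ∂μ‖ ≤ ∫ x, ‖f x‖ * ‖g x‖ ∂μ := by
    refine (norm_integral_le_integral_norm _).trans_eq (integral_congr_ae ?_)
    exact Eventually.of_forall fun x => by simp
  refine h1.trans (key.trans_eq ?_)
  rw [hfe, hge]
  rw [ENNReal.toReal_ofReal (by positivity), ENNReal.toReal_ofReal (by positivity)]
  norm_num

lemma aux_ofReal {f : Ω → ℝ} (hf : MemLp f 2 μ) : MemLp (fun x => (f x : ℂ)) 2 μ :=
  (Complex.ofRealCLM : ℝ →L[ℝ] ℂ).comp_memLp' hf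

lemma aux_mul_const {f : Ω → ℂ} (hf : MemLp f 2 μ) (a : ℂ) :
    MemLp (fun x => f x * a) 2 μ := by
  simpa [mul_comm] using hf.const_mul a

end Aux

noncomputable def eω (ω : ℝ) (t : ℤ) : ℂ := Complex.exp (Complex.I * (t : ℂ) * (ω : ℂ))

lemma eω_add (ω : ℝ) (a b : ℤ) : eω ω a * eω ω b = eω ω (a + b) := by
  rw [eω, eω, eω, ← Complex.exp_add]; congr 1; push_cast; ring

lemma eω_conj (ω : ℝ) (t : ℤ) : (starRingEnd ℂ) (eω ω t) = eω ω (-t) := by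
  rw [eω, eω, ← Complex.exp_conj]; congr 1; simp [Complex.conj_ofReal]

lemma eω_conj' (ω : ℝ) (t : ℤ) :
    (starRingEnd ℂ) (Complex.exp (Complex.I * (t : ℂ) * (ω : ℂ))) = eω ω (-t) :=
  eω_conj ω t

lemma eω_norm (ω : ℝ) (t : ℤ) : ‖eω ω t‖ = 1 := by
  rw [eω, Complex.norm_exp]
  norm_num [Complex.mul_re, Complex.mul_im]

set_option maxHeartbeats 1000000 in
/-- Tapered complete periodogram is unbiased:
`E[J̃_n(ω) conj(J_{h,n}(ω))] = (n⁻¹ ∑_t h_t) f(ω)`, and `= f(ω)` when `∑_t h_t = n`. -/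
theorem stmt_5 {Ω : Type*} [MeasurableSpace Ω] (μ : Measure Ω) [IsProbabilityMeasure μ]
    (X : ℤ → Ω → ℝ) (c : ℤ → ℝ)
    (hL2 : ∀ t : ℤ, MemLp (X t) 2 μ)
    (hmean : ∀ t : ℤ, ∫ ω, X t ω ∂μ = 0)
    (hcov : ∀ s t : ℤ, ∫ ω, X s ω * X t ω ∂μ = c (t - s))
    (hsum : Summable fun r : ℤ => |c r|)
    (n : ℕ) (hn : 1 ≤ n) (ω : ℝ) (h : ℤ → ℝ)
    -- the best linear predictors of `X_τ` given `X_1,…,X_n`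
    (Xhat : ℤ → Ω → ℝ)
    (hspan : ∀ τ : ℤ, ∃ φ : ℤ → ℝ,
      Xhat τ = fun ω' => ∑ t ∈ Finset.Icc (1 : ℤ) (n : ℤ), φ t * X t ω')
    (hproj : ∀ (τ : ℤ), ∀ t ∈ Finset.Icc (1 : ℤ) (n : ℤ),
      ∫ ω', X t ω' * Xhat τ ω' ∂μ = c (t - τ))
    -- the regular and tapered DFTs
    (Jn Jh : Ω → ℂ)
    (hJn : Jn = fun ω' => (Real.sqrt n : ℂ)⁻¹ *
      ∑ t ∈ Finset.Icc (1 : ℤ) (n : ℤ),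
        (X t ω' : ℂ) * Complex.exp (Complex.I * (t : ℂ) * (ω : ℂ)))
    (hJh : Jh = fun ω' => (Real.sqrt n : ℂ)⁻¹ *
      ∑ t ∈ Finset.Icc (1 : ℤ) (n : ℤ),
        (h t : ℂ) * (X t ω' : ℂ) * Complex.exp (Complex.I * (t : ℂ) * (ω : ℂ)))
    -- the predictive DFT, as an L² limit of its partial sums
    (Jhat : Ω → ℂ) (S : ℕ → Ω → ℂ)
    (hS : ∀ m : ℕ, S m = fun ω' => (Real.sqrt n : ℂ)⁻¹ *
      ((∑ τ ∈ Finset.Icc (-(m : ℤ)) (0 : ℤ),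
          (Xhat τ ω' : ℂ) * Complex.exp (Complex.I * (τ : ℂ) * (ω : ℂ))) +
       ∑ τ ∈ Finset.Icc ((n : ℤ) + 1) ((n : ℤ) + (m : ℤ)),
          (Xhat τ ω' : ℂ) * Complex.exp (Complex.I * (τ : ℂ) * (ω : ℂ))))
    (hJhatL2 : MemLp Jhat 2 μ)
    (hconv : Tendsto (fun m => eLpNorm (fun ω' => S m ω' - Jhat ω') 2 μ)
      atTop (nhds 0)) :
    (∫ ω', (Jn ω' + Jhat ω') * (starRingEnd ℂ) (Jh ω') ∂μ =
      (((n : ℝ)⁻¹ * ∑ t ∈ Finset.Icc (1 : ℤ) (n : ℤ), h t : ℝ) : ℂ) *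
        ∑' r : ℤ, (c r : ℂ) * Complex.exp (Complex.I * (r : ℂ) * (ω : ℂ))) ∧
    ((∑ t ∈ Finset.Icc (1 : ℤ) (n : ℤ), h t) = (n : ℝ) →
      ∫ ω', (Jn ω' + Jhat ω') * (starRingEnd ℂ) (Jh ω') ∂μ =
        ∑' r : ℤ, (c r : ℂ) * Complex.exp (Complex.I * (r : ℂ) * (ω : ℂ))) := by
  classical
  set F : Finset ℤ := Finset.Icc (1 : ℤ) (n : ℤ) with hF
  -- the combined process
  set Y : ℤ → Ω → ℝ := fun s => if s ∈ F then X s else Xhat s with hYdef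
  have hXhatL2 : ∀ τ, MemLp (Xhat τ) 2 μ := by
    intro τ
    obtain ⟨φ, hφ⟩ := hspan τ
    rw [hφ]
    exact memLp_finset_sum _ (fun t _ => ((hL2 t).const_mul (φ t)))
  have hYL2 : ∀ s, MemLp (Y s) 2 μ := by
    intro s
    by_cases hs : s ∈ F <;> simp only [hYdef, hs, if_true, if_false] <;>
      [exact hL2 s; exact hXhatL2 s]
  have hYcov : ∀ s : ℤ, ∀ t ∈ F, ∫ x, Y s x * X t x ∂μ = c (t - s) := by
    intro s t ht
    by_cases hs : s ∈ F
    · simp only [hYdef, hs, if_true]; exact hcov s t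
    · simp only [hYdef, hs, if_false]
      rw [show (fun x => Xhat s x * X t x) = fun x => X t x * Xhat s x from
        funext fun x => mul_comm _ _]
      exact hproj s t ht
  have ceven : ∀ r : ℤ, c (-r) = c r := by
    intro r
    have h1 := hcov r 0
    have h2 := hcov 0 r
    rw [show (fun x => X r x * X 0 x) = fun x => X 0 x * X r x from
      funext fun x => mul_comm _ _] at h1
    rw [h1] at h2
    simpa using h2
  -- summability of the spectral series
  have hg : Summable (fun r : ℤ => (c r : ℂ) * eω ω r) := by
    apply Summable.of_norm
    apply Summable.of_nonneg_of_le (fun r => norm_nonneg _) (fun r => ?_) hsum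
    rw [norm_mul, eω_norm, mul_one, Complex.norm_real, Real.norm_eq_abs]
  set L : ℂ := ∑' r : ℤ, (c r : ℂ) * eω ω r with hL
  -- combined partial DFT
  have hsqrtn : (Real.sqrt n : ℂ)⁻¹ * (Real.sqrt n : ℂ)⁻¹ = (n : ℂ)⁻¹ := by
    rw [← mul_inv, ← Complex.ofReal_mul, Real.mul_self_sqrt (Nat.cast_nonneg n)]
    push_cast
    ring
  have hU : ∀ m : ℕ, Finset.Icc (-(m:ℤ)) ((n:ℤ)+(m:ℤ)) =
      (Finset.Icc (-(m:ℤ)) (0:ℤ) ∪ F) ∪ Finset.Icc ((n:ℤ)+1) ((n:ℤ)+(m:ℤ)) := by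
    intro m
    ext x
    simp only [Finset.mem_union, Finset.mem_Icc, hF]
    omega
  have hJnS : ∀ m : ℕ, (fun x => Jn x + S m x) =
      fun x => (Real.sqrt n : ℂ)⁻¹ *
        ∑ s ∈ Finset.Icc (-(m:ℤ)) ((n:ℤ)+(m:ℤ)), (Y s x : ℂ) * eω ω s := by
    intro m
    funext x
    simp only [hJn, hS]
    have dA : Disjoint (Finset.Icc (-(m:ℤ)) (0:ℤ)) F := by
      simp only [Finset.disjoint_left, Finset.mem_Icc, hF]
      omega
    have dAB : Disjoint (Finset.Icc (-(m:ℤ)) (0:ℤ) ∪ F)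
        (Finset.Icc ((n:ℤ)+1) ((n:ℤ)+(m:ℤ))) := by
      simp only [Finset.disjoint_left, Finset.mem_Icc, Finset.mem_union, hF]
      omega
    rw [hU m, Finset.sum_union dAB, Finset.sum_union dA]
    have e1 : ∑ s ∈ Finset.Icc (-(m:ℤ)) (0:ℤ), (Y s x : ℂ) * eω ω s =
        ∑ s ∈ Finset.Icc (-(m:ℤ)) (0:ℤ), (Xhat s x : ℂ) * eω ω s := by
      refine Finset.sum_congr rfl fun s hs => ?_
      have hsF : s ∉ F := by
        simp only [Finset.mem_Icc] at hs; simp only [hF, Finset.mem_Icc]; omega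
      simp only [hYdef, hsF, if_false]
    have e2 : ∑ s ∈ F, (Y s x : ℂ) * eω ω s = ∑ s ∈ F, (X s x : ℂ) * eω ω s := by
      refine Finset.sum_congr rfl fun s hs => ?_
      simp only [hYdef, hs, if_true]
    have e3 : ∑ s ∈ Finset.Icc ((n:ℤ)+1) ((n:ℤ)+(m:ℤ)), (Y s x : ℂ) * eω ω s =
        ∑ s ∈ Finset.Icc ((n:ℤ)+1) ((n:ℤ)+(m:ℤ)), (Xhat s x : ℂ) * eω ω s := by
      refine Finset.sum_congr rfl fun s hs => ?_
      have hsF : s ∉ F := by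
        simp only [Finset.mem_Icc] at hs; simp only [hF, Finset.mem_Icc]; omega
      simp only [hYdef, hsF, if_false]
    rw [e1, e2, e3]
    simp only [eω]
    ring
  -- MemLp facts
  have hSL2 : ∀ m, MemLp (fun x => Jn x + S m x) 2 μ := by
    intro m
    rw [hJnS m]
    refine MemLp.const_mul ?_ _
    exact memLp_finset_sum _ (fun s _ => aux_mul_const (aux_ofReal (hYL2 s)) _)
  have hJhL2 : MemLp Jh 2 μ := by
    rw [hJh]
    refine MemLp.const_mul ?_ _
    exact memLp_finset_sum _
      (fun t _ => aux_mul_const ((aux_ofReal (hL2 t)).const_mul _) _)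
  have hJnJhatL2 : MemLp (fun x => Jn x + Jhat x) 2 μ := by
    have hJnL2 : MemLp Jn 2 μ := by
      rw [hJn]
      refine MemLp.const_mul ?_ _
      exact memLp_finset_sum _ (fun t _ => aux_mul_const (aux_ofReal (hL2 t)) _)
    exact hJnL2.add hJhatL2
  -- the integral of (Jn + S m) * conj Jh
  set K : ℤ → ℤ → ℂ := fun s t => (n:ℂ)⁻¹ * ((h t : ℂ) * eω ω (s - t)) with hK
  have key : ∀ m : ℕ, ∫ x, (Jn x + S m x) * (starRingEnd ℂ) (Jh x) ∂μ =
      (n:ℂ)⁻¹ * ∑ t ∈ F, (h t : ℂ) *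
        ∑ r ∈ Finset.Icc (-(m:ℤ) - t) ((n:ℤ)+(m:ℤ) - t), (c r : ℂ) * eω ω r := by
    intro m
    set U : Finset ℤ := Finset.Icc (-(m:ℤ)) ((n:ℤ)+(m:ℤ)) with hUdef
    have step1 : ∀ x, (Jn x + S m x) * (starRingEnd ℂ) (Jh x) =
        ∑ s ∈ U, ∑ t ∈ F, K s t * ((Y s x * X t x : ℝ) : ℂ) := by
      intro x
      have h1 := congrFun (hJnS m) x
      rw [h1, hJh]
      simp only [map_mul, map_sum, map_inv₀, Complex.conj_ofReal, eω_conj']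
      have : ((Real.sqrt n : ℂ)⁻¹ * ∑ s ∈ U, (Y s x : ℂ) * eω ω s) *
          ((Real.sqrt n : ℂ)⁻¹ * ∑ t ∈ F, (h t : ℂ) * (X t x : ℂ) * eω ω (-t)) =
          ((Real.sqrt n : ℂ)⁻¹ * (Real.sqrt n : ℂ)⁻¹) *
          ((∑ s ∈ U, (Y s x : ℂ) * eω ω s) *
            ∑ t ∈ F, (h t : ℂ) * (X t x : ℂ) * eω ω (-t)) := by ring
      rw [this, hsqrtn, Finset.sum_mul_sum, Finset.mul_sum]
      refine Finset.sum_congr rfl fun s _ => ?_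
      rw [Finset.mul_sum]
      refine Finset.sum_congr rfl fun t _ => ?_
      simp only [hK]
      push_cast
      rw [show eω ω (s - t) = eω ω s * eω ω (-t) by rw [eω_add]; congr 1]
      ring
    have hIint : ∀ (s t : ℤ), Integrable (fun x => K s t * ((Y s x * X t x : ℝ) : ℂ)) μ := by
      intro s t
      exact ((aux_mul_int_real (hYL2 s) (hL2 t)).ofReal (𝕜 := ℂ)).const_mul _
    calc ∫ x, (Jn x + S m x) * (starRingEnd ℂ) (Jh x) ∂μ
        = ∫ x, ∑ s ∈ U, ∑ t ∈ F, K s t * ((Y s x * X t x : ℝ) : ℂ) ∂μ :=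
          integral_congr_ae (Eventually.of_forall step1)
      _ = ∑ s ∈ U, ∑ t ∈ F, K s t * ((c (t - s) : ℝ) : ℂ) := by
          rw [integral_finset_sum _ (fun s _ =>
            integrable_finset_sum _ (fun t _ => hIint s t))]
          refine Finset.sum_congr rfl fun s _ => ?_
          rw [integral_finset_sum _ (fun t _ => hIint s t)]
          refine Finset.sum_congr rfl fun t ht => ?_
          rw [integral_const_mul,
            show ∫ x, ((Y s x * X t x : ℝ) : ℂ) ∂μ = ((∫ x, Y s x * X t x ∂μ : ℝ) : ℂ)
              from integral_ofReal, hYcov s t ht]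
      _ = ∑ t ∈ F, ∑ s ∈ U, K s t * ((c (t - s) : ℝ) : ℂ) := Finset.sum_comm
      _ = (n:ℂ)⁻¹ * ∑ t ∈ F, (h t : ℂ) *
            ∑ r ∈ Finset.Icc (-(m:ℤ) - t) ((n:ℤ)+(m:ℤ) - t), (c r : ℂ) * eω ω r := by
          rw [Finset.mul_sum]
          refine Finset.sum_congr rfl fun t _ => ?_
          have hreidx : ∑ r ∈ Finset.Icc (-(m:ℤ) - t) ((n:ℤ)+(m:ℤ) - t),
              (c r : ℂ) * eω ω r = ∑ s ∈ U, (c (t - s) : ℂ) * eω ω (s - t) := by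
            rw [show (-(m:ℤ) - t) = -(m:ℤ) + -t by ring,
              show ((n:ℤ)+(m:ℤ) - t) = ((n:ℤ)+(m:ℤ)) + -t by ring,
              ← Finset.map_add_right_Icc, Finset.sum_map]
            refine Finset.sum_congr rfl fun s _ => ?_
            simp only [addRightEmbedding_apply]
            rw [show s + -t = s - t by ring, show (t - s : ℤ) = -(s - t) by ring, ceven]
          rw [hreidx, Finset.mul_sum, Finset.mul_sum]
          refine Finset.sum_congr rfl fun s _ => ?_
          simp only [hK]
          ring
  -- limit of the RHS
  have hlimR : Tendsto (fun m : ℕ => (n:ℂ)⁻¹ * ∑ t ∈ F, (h t : ℂ) *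
      ∑ r ∈ Finset.Icc (-(m:ℤ) - t) ((n:ℤ)+(m:ℤ) - t), (c r : ℂ) * eω ω r)
      atTop (nhds ((n:ℂ)⁻¹ * ∑ t ∈ F, (h t : ℂ) * L)) := by
    refine Tendsto.const_mul _ (tendsto_finset_sum _ fun t _ => Tendsto.const_mul _ ?_)
    have hΦ : Tendsto (fun m : ℕ => Finset.Icc (-(m:ℤ) - t) ((n:ℤ)+(m:ℤ) - t))
        atTop atTop := by
      apply tendsto_atTop_finset_of_monotone
      · intro a b hab
        apply Finset.Icc_subset_Icc <;> omega
      · intro x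
        exact ⟨x.natAbs + t.natAbs + n, by simp only [Finset.mem_Icc]; omega⟩
    exact hg.hasSum.comp hΦ
  -- limit of the LHS
  have hlimL : Tendsto (fun m : ℕ => ∫ x, (Jn x + S m x) * (starRingEnd ℂ) (Jh x) ∂μ)
      atTop (nhds (∫ x, (Jn x + Jhat x) * (starRingEnd ℂ) (Jh x) ∂μ)) := by
    have hconjL2 : MemLp (fun x => (starRingEnd ℂ) (Jh x)) 2 μ := aux_conj hJhL2
    have hint2 : Integrable (fun x => (Jn x + Jhat x) * (starRingEnd ℂ) (Jh x)) μ :=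
      aux_mul_int hJnJhatL2 hconjL2
    have hdiffL2 : ∀ m, MemLp (fun x => S m x - Jhat x) 2 μ := by
      intro m
      have h1 := (hSL2 m).sub hJnJhatL2
      have : ((fun x => Jn x + S m x) - fun x => Jn x + Jhat x) = fun x => S m x - Jhat x := by
        funext x; simp only [Pi.sub_apply]; ring
      rwa [this] at h1
    have hint3 : ∀ m, Integrable (fun x => (S m x - Jhat x) * (starRingEnd ℂ) (Jh x)) μ :=
      fun m => aux_mul_int (hdiffL2 m) hconjL2
    have hdecomp : ∀ m, ∫ x, (Jn x + S m x) * (starRingEnd ℂ) (Jh x) ∂μ =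
        (∫ x, (Jn x + Jhat x) * (starRingEnd ℂ) (Jh x) ∂μ) +
        ∫ x, (S m x - Jhat x) * (starRingEnd ℂ) (Jh x) ∂μ := by
      intro m
      rw [← integral_add hint2 (hint3 m)]
      refine integral_congr_ae (Eventually.of_forall fun x => ?_)
      simp only
      ring
    have heps : Tendsto (fun m => ∫ x, (S m x - Jhat x) * (starRingEnd ℂ) (Jh x) ∂μ)
        atTop (nhds 0) := by
      set C : ℝ := (eLpNorm (fun x => (starRingEnd ℂ) (Jh x)) 2 μ).toReal with hC
      have hbnd : ∀ m, ‖∫ x, (S m x - Jhat x) * (starRingEnd ℂ) (Jh x) ∂μ‖ ≤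
          (eLpNorm (fun x => S m x - Jhat x) 2 μ).toReal * C :=
        fun m => aux_holder (hdiffL2 m) hconjL2
      have htr : Tendsto (fun m => (eLpNorm (fun x => S m x - Jhat x) 2 μ).toReal * C)
          atTop (nhds 0) := by
        have h0 : Tendsto (fun m => (eLpNorm (fun x => S m x - Jhat x) 2 μ).toReal)
            atTop (nhds 0) := by
          have := (ENNReal.tendsto_toReal (a := 0) (by norm_num)).comp hconv
          simpa [Function.comp_def] using this
        simpa using h0.mul_const C
      exact squeeze_zero_norm hbnd htr
    have := (tendsto_const_nhds (x := ∫ x, (Jn x + Jhat x) * (starRingEnd ℂ) (Jh x) ∂μ)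
      (f := atTop (α := ℕ))).add heps
    rw [add_zero] at this
    refine Tendsto.congr (fun m => (hdecomp m).symm) this
  have main : ∫ x, (Jn x + Jhat x) * (starRingEnd ℂ) (Jh x) ∂μ =
      (n:ℂ)⁻¹ * ∑ t ∈ F, (h t : ℂ) * L := by
    refine tendsto_nhds_unique ?_ hlimR
    have : (fun m : ℕ => ∫ x, (Jn x + S m x) * (starRingEnd ℂ) (Jh x) ∂μ) =
        fun m : ℕ => (n:ℂ)⁻¹ * ∑ t ∈ F, (h t : ℂ) *
          ∑ r ∈ Finset.Icc (-(m:ℤ) - t) ((n:ℤ)+(m:ℤ) - t), (c r : ℂ) * eω ω r := by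
      funext m; exact key m
    rw [← this]
    exact hlimL
  have hfinal : ∫ x, (Jn x + Jhat x) * (starRingEnd ℂ) (Jh x) ∂μ =
      (((n : ℝ)⁻¹ * ∑ t ∈ F, h t : ℝ) : ℂ) * L := by
    rw [main]
    push_cast
    rw [mul_assoc, Finset.sum_mul]
  constructor
  · exact hfinal
  · intro hsum1
    rw [hfinal, hsum1]
    have : ((n : ℝ)⁻¹ * (n:ℝ) : ℝ) = 1 := by
      field_simp
    rw [this, Complex.ofReal_one, one_mul, hL]
    rfl
end

section
/- Let X : ℤ → L⁴(Ω) be mean-zero and fourth-order stationary, with second cumulant κ₂(r) = E[X_t X_{t+r}] and fourth cumulant κ₄(r₁, r₂, r₃) = cum(X_t, X_{t+r₁}, X_{t+r₂}, X_{t+r₃}), and suppose S₂ := ∑_{r∈ℤ} |κ₂(r)| < ∞ and S₄ := ∑_{r₁,r₂,r₃∈ℤ} |κ₄(r₁,r₂,r₃)| < ∞. Fix ω ∈ ℝ, 1 ≤ i ≤ n, 0 ≤ j ≤ n. Define μ̌_i = n^{-1} ∑_{t=1}^n (X_t X_i − E[X_t X_i]) e^{itω} and č_j = ĉ_{j,n}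 − E[ĉ_{j,n}] with ĉ_{j,n} = n^{-1}∑_{t=1}^{n−j} X_t X_{t+j}. Then |cov(μ̌_i, č_j)| ≤ (2 S₂² + S₄)/n². -/
open MeasureTheory

private lemma aux_sum_le {α β : Type*} [DecidableEq β] {f : β → ℝ}
    (hf : Summable fun r => |f r|) (s : Finset α) (g : α → β)
    (hg : Function.Injective g) : ∑ t ∈ s, |f (g t)| ≤ ∑' r, |f r| := by
  have h : ∑ t ∈ s, |f (g t)| = ∑ b ∈ s.image g, |f b| :=
    (Finset.sum_image (f := fun b => |f b|) (fun x _ y _ h => hg h)).symm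
  rw [h]
  exact Summable.sum_le_tsum _ (fun _ _ => abs_nonneg _) hf

/-- Cumulant bound: `|cov(μ̌_i, č_j)| ≤ (2 S₂² + S₄)/n²` for the centered
half-periodogram term `μ̌_i` and centered sample autocovariance `č_j`. -/
theorem stmt_18 {Ω : Type*} [MeasurableSpace Ω] (μ : Measure Ω) [IsProbabilityMeasure μ]
    (X : ℤ → Ω → ℝ) (κ₂ : ℤ → ℝ) (κ₄ : ℤ → ℤ → ℤ → ℝ) (S₂ S₄ : ℝ)
    (hL4 : ∀ t : ℤ, MemLp (X t) 4 μ)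
    (hint2 : ∀ s t : ℤ, Integrable (fun ω => X s ω * X t ω) μ)
    (hint4 : ∀ a b c d : ℤ, Integrable (fun ω => X a ω * X b ω * X c ω * X d ω) μ)
    (hmean : ∀ t : ℤ, ∫ ω, X t ω ∂μ = 0)
    (hκ₂ : ∀ t r : ℤ, ∫ ω, X t ω * X (t + r) ω ∂μ = κ₂ r)
    -- fourth-order stationarity: the fourth cumulant is shift invariant
    (hκ₄ : ∀ t r₁ r₂ r₃ : ℤ,
      ∫ ω, X t ω * X (t + r₁) ω * X (t + r₂) ω * X (t + r₃) ω ∂μ =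
        κ₄ r₁ r₂ r₃ + κ₂ r₁ * κ₂ (r₃ - r₂) + κ₂ r₂ * κ₂ (r₃ - r₁)
          + κ₂ r₃ * κ₂ (r₂ - r₁))
    (hS₂sum : Summable fun r : ℤ => |κ₂ r|)
    (hS₂ : S₂ = ∑' r : ℤ, |κ₂ r|)
    (hS₄sum : Summable fun r : ℤ × ℤ × ℤ => |κ₄ r.1 r.2.1 r.2.2|)
    (hS₄ : S₄ = ∑' r : ℤ × ℤ × ℤ, |κ₄ r.1 r.2.1 r.2.2|)
    (n : ℕ) (hn : 1 ≤ n) (ω : ℝ) (i : ℤ) (hi : i ∈ Finset.Icc (1 : ℤ) (n : ℤ))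
    (j : ℕ) (hj : j ≤ n)
    (μcheck : Ω → ℂ) (ccheck : Ω → ℝ)
    (hμcheck : μcheck = fun ω' => (n : ℂ)⁻¹ *
      ∑ t ∈ Finset.Icc (1 : ℤ) (n : ℤ),
        ((X t ω' * X i ω' - κ₂ (i - t) : ℝ) : ℂ) *
          Complex.exp (Complex.I * (t : ℂ) * (ω : ℂ)))
    (hccheck : ccheck = fun ω' => (n : ℝ)⁻¹ *
      ∑ t ∈ Finset.Icc (1 : ℤ) ((n : ℤ) - j), (X t ω' * X (t + j) ω' - κ₂ j)) :
    ‖∫ ω', μcheck ω' * ((ccheck ω' : ℝ) : ℂ) ∂μ‖ ≤ (2 * S₂ ^ 2 + S₄) / n ^ 2 := by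
  subst hμcheck hccheck
  set T : Finset ℤ := Finset.Icc (1 : ℤ) (n : ℤ) with hT
  set U : Finset ℤ := Finset.Icc (1 : ℤ) ((n : ℤ) - j) with hU
  set A : ℤ → Ω → ℝ := fun t ω' => X t ω' * X i ω' - κ₂ (i - t) with hA
  set B : ℤ → Ω → ℝ := fun τ ω' => X τ ω' * X (τ + j) ω' - κ₂ j with hB
  set e : ℤ → ℂ := fun t => Complex.exp (Complex.I * (t : ℂ) * (ω : ℂ)) with he
  set c : ℤ → ℤ → ℝ := fun t τ =>
    κ₄ (i - t) (τ - t) (τ + j - t) + κ₂ (τ - t) * κ₂ (τ + j - i)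
      + κ₂ (τ + j - t) * κ₂ (τ - i) with hc
  have hnR : (0 : ℝ) < (n : ℝ) := by exact_mod_cast hn
  -- integrability of the product of the two centered terms
  have intgr : ∀ t τ : ℤ, Integrable (fun ω' => A t ω' * B τ ω') μ := by
    intro t τ
    have heq : (fun ω' => A t ω' * B τ ω') = fun ω' =>
        X t ω' * X i ω' * X τ ω' * X (τ + j) ω'
          - κ₂ j * (X t ω' * X i ω')
          - κ₂ (i - t) * (X τ ω' * X (τ + j) ω')
          + κ₂ (i - t) * κ₂ j := by
      funext ω'; simp only [hA, hB]; ring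
    rw [heq]
    exact (((hint4 t i τ (τ + j)).sub ((hint2 t i).const_mul _)).sub
      ((hint2 τ (τ + j)).const_mul _)).add (integrable_const _)
  -- value of the covariance integral
  have intAB : ∀ t τ : ℤ, ∫ ω', A t ω' * B τ ω' ∂μ = c t τ := by
    intro t τ
    have key := hκ₄ t (i - t) (τ - t) (τ + j - t)
    rw [show t + (i - t) = i from by ring, show t + (τ - t) = τ from by ring,
        show t + (τ + (j:ℤ) - t) = τ + j from by ring] at key
    have k2a := hκ₂ t (i - t)
    rw [show t + (i - t) = i from by ring] at k2a
    have k2b := hκ₂ τ (j : ℤ)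
    have heq : (fun ω' => A t ω' * B τ ω') = fun ω' =>
        X t ω' * X i ω' * X τ ω' * X (τ + j) ω'
          - κ₂ j * (X t ω' * X i ω')
          - κ₂ (i - t) * (X τ ω' * X (τ + j) ω')
          + κ₂ (i - t) * κ₂ j := by
      funext ω'; simp only [hA, hB]; ring
    have i4 := hint4 t i τ (τ + j)
    have i2a := hint2 t i
    have i2b := hint2 τ (τ + j)
    have I2 : Integrable (fun ω' => X t ω' * X i ω' * X τ ω' * X (τ + j) ω'
        - κ₂ j * (X t ω' * X i ω')) μ := i4.sub (i2a.const_mul _)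
    have I1 : Integrable (fun ω' => X t ω' * X i ω' * X τ ω' * X (τ + j) ω'
        - κ₂ j * (X t ω' * X i ω') - κ₂ (i - t) * (X τ ω' * X (τ + j) ω')) μ :=
      I2.sub (i2b.const_mul _)
    rw [heq,
        integral_add I1 (integrable_const _),
        integral_sub I2 (i2b.const_mul _),
        integral_sub i4 (i2a.const_mul _),
        integral_const_mul, integral_const_mul, integral_const,
        key, k2a, k2b]
    have e1 : (τ + (j:ℤ) - t) - (τ - t) = (j : ℤ) := by ring
    have e2 : (τ + (j:ℤ) - t) - (i - t) = τ + j - i := by ring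
    have e3 : (τ - t) - (i - t) = τ - i := by ring
    rw [e1, e2, e3]
    simp only [hc, measure_univ, probReal_univ, ENNReal.toReal_one, smul_eq_mul, one_mul]
    ring
  -- norm of phase factor
  have hnorme : ∀ t : ℤ, ‖e t‖ = 1 := by
    intro t
    have : (Complex.I * (t : ℂ) * (ω : ℂ)).re = 0 := by simp
    simp [he, Complex.norm_exp, this]
  -- rewrite the integrand as a double sum
  have eqfun : (fun ω' => ((n : ℂ)⁻¹ *
      ∑ t ∈ T, ((X t ω' * X i ω' - κ₂ (i - t) : ℝ) : ℂ) *
          Complex.exp (Complex.I * (t : ℂ) * (ω : ℂ))) *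
        ((((n : ℝ)⁻¹ * ∑ τ ∈ U, (X τ ω' * X (τ + j) ω' - κ₂ j) : ℝ)) : ℂ))
      = fun ω' => ∑ t ∈ T, ∑ τ ∈ U,
          ((n : ℂ)⁻¹ * (n : ℂ)⁻¹ * e t) * ((A t ω' * B τ ω' : ℝ) : ℂ) := by
    funext ω'
    simp only [hA, hB, he]
    push_cast
    rw [Finset.mul_sum, Finset.mul_sum, Finset.sum_mul_sum]
    exact Finset.sum_congr rfl fun t _ => Finset.sum_congr rfl fun τ _ => by ring
  have hval : (∫ ω', ((n : ℂ)⁻¹ *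
      ∑ t ∈ T, ((X t ω' * X i ω' - κ₂ (i - t) : ℝ) : ℂ) *
          Complex.exp (Complex.I * (t : ℂ) * (ω : ℂ))) *
        ((((n : ℝ)⁻¹ * ∑ τ ∈ U, (X τ ω' * X (τ + j) ω' - κ₂ j) : ℝ)) : ℂ) ∂μ)
      = ∑ t ∈ T, ∑ τ ∈ U, ((n : ℂ)⁻¹ * (n : ℂ)⁻¹ * e t) * ((c t τ : ℝ) : ℂ) := by
    rw [eqfun]
    have hInt1 : ∀ t τ : ℤ, Integrable
        (fun ω' => ((n : ℂ)⁻¹ * (n : ℂ)⁻¹ * e t) * ((A t ω' * B τ ω' : ℝ) : ℂ)) μ :=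
      fun t τ => (intgr t τ).ofReal.const_mul _
    have hInt2 : ∀ t : ℤ, Integrable
        (fun ω' => ∑ τ ∈ U, ((n : ℂ)⁻¹ * (n : ℂ)⁻¹ * e t) * ((A t ω' * B τ ω' : ℝ) : ℂ)) μ :=
      fun t => integrable_finset_sum U fun τ _ => hInt1 t τ
    rw [integral_finset_sum T fun t _ => hInt2 t]
    refine Finset.sum_congr rfl fun t _ => ?_
    rw [integral_finset_sum U fun τ _ => hInt1 t τ]
    refine Finset.sum_congr rfl fun τ _ => ?_
    have hIof : (∫ ω', ((A t ω' * B τ ω' : ℝ) : ℂ) ∂μ)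
        = (((∫ ω', A t ω' * B τ ω' ∂μ : ℝ)) : ℂ) := integral_ofReal
    rw [integral_const_mul, hIof, intAB]
  refine le_trans (le_of_eq (congrArg norm hval)) ?_
  -- bound the double sum of absolute values
  have habs : ∀ t τ : ℤ, |c t τ| ≤ |κ₄ (i - t) (τ - t) (τ + j - t)|
      + |κ₂ (τ - t)| * |κ₂ (τ + j - i)| + |κ₂ (τ + j - t)| * |κ₂ (τ - i)| := by
    intro t τ
    simp only [hc]
    calc |κ₄ (i - t) (τ - t) (τ + j - t) + κ₂ (τ - t) * κ₂ (τ + j - i)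
          + κ₂ (τ + j - t) * κ₂ (τ - i)|
        ≤ |κ₄ (i - t) (τ - t) (τ + j - t) + κ₂ (τ - t) * κ₂ (τ + j - i)|
          + |κ₂ (τ + j - t) * κ₂ (τ - i)| := abs_add_le _ _
      _ ≤ |κ₄ (i - t) (τ - t) (τ + j - t)| + |κ₂ (τ - t) * κ₂ (τ + j - i)|
          + |κ₂ (τ + j - t) * κ₂ (τ - i)| := by gcongr; exact abs_add_le _ _
      _ = _ := by rw [abs_mul, abs_mul]
  have hS₂0 : 0 ≤ S₂ := hS₂ ▸ tsum_nonneg fun _ => abs_nonneg _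
  -- the three pieces
  have hsum4 : ∑ t ∈ T, ∑ τ ∈ U, |κ₄ (i - t) (τ - t) (τ + j - t)| ≤ S₄ := by
    rw [← Finset.sum_product', hS₄]
    exact aux_sum_le hS₄sum (T ×ˢ U)
      (fun p => (i - p.1, p.2 - p.1, p.2 + j - p.1)) (by
        intro p q h
        simp only [Prod.mk.injEq] at h
        exact Prod.ext (by omega) (by omega))
  have hsum2a : ∑ t ∈ T, ∑ τ ∈ U, |κ₂ (τ - t)| * |κ₂ (τ + j - i)| ≤ S₂ * S₂ := by
    rw [Finset.sum_comm]
    calc ∑ τ ∈ U, ∑ t ∈ T, |κ₂ (τ - t)| * |κ₂ (τ + j - i)|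
        = ∑ τ ∈ U, |κ₂ (τ + j - i)| * ∑ t ∈ T, |κ₂ (τ - t)| := by
          refine Finset.sum_congr rfl fun τ _ => ?_
          rw [Finset.mul_sum]
          exact Finset.sum_congr rfl fun _ _ => mul_comm _ _
      _ ≤ ∑ τ ∈ U, |κ₂ (τ + j - i)| * S₂ := by
          refine Finset.sum_le_sum fun τ _ => ?_
          refine mul_le_mul_of_nonneg_left ?_ (abs_nonneg _)
          rw [hS₂]
          exact aux_sum_le hS₂sum T (fun t => τ - t) (fun a b h => by simp only [] at h; omega)
      _ = (∑ τ ∈ U, |κ₂ (τ + j - i)|) * S₂ := (Finset.sum_mul _ _ _).symm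
      _ ≤ S₂ * S₂ := by
          refine mul_le_mul_of_nonneg_right ?_ hS₂0
          rw [hS₂]
          exact aux_sum_le hS₂sum U (fun τ => τ + j - i) (fun a b h => by simp only [] at h; omega)
  have hsum2b : ∑ t ∈ T, ∑ τ ∈ U, |κ₂ (τ + j - t)| * |κ₂ (τ - i)| ≤ S₂ * S₂ := by
    rw [Finset.sum_comm]
    calc ∑ τ ∈ U, ∑ t ∈ T, |κ₂ (τ + j - t)| * |κ₂ (τ - i)|
        = ∑ τ ∈ U, |κ₂ (τ - i)| * ∑ t ∈ T, |κ₂ (τ + j - t)| := by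
          refine Finset.sum_congr rfl fun τ _ => ?_
          rw [Finset.mul_sum]
          exact Finset.sum_congr rfl fun _ _ => mul_comm _ _
      _ ≤ ∑ τ ∈ U, |κ₂ (τ - i)| * S₂ := by
          refine Finset.sum_le_sum fun τ _ => ?_
          refine mul_le_mul_of_nonneg_left ?_ (abs_nonneg _)
          rw [hS₂]
          exact aux_sum_le hS₂sum T (fun t => τ + j - t) (fun a b h => by simp only [] at h; omega)
      _ = (∑ τ ∈ U, |κ₂ (τ - i)|) * S₂ := (Finset.sum_mul _ _ _).symm
      _ ≤ S₂ * S₂ := by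
          refine mul_le_mul_of_nonneg_right ?_ hS₂0
          rw [hS₂]
          exact aux_sum_le hS₂sum U (fun τ => τ - i) (fun a b h => by simp only [] at h; omega)
  have htotal : ∑ t ∈ T, ∑ τ ∈ U, |c t τ| ≤ 2 * S₂ ^ 2 + S₄ := by
    calc ∑ t ∈ T, ∑ τ ∈ U, |c t τ|
        ≤ ∑ t ∈ T, ∑ τ ∈ U, (|κ₄ (i - t) (τ - t) (τ + j - t)|
            + |κ₂ (τ - t)| * |κ₂ (τ + j - i)| + |κ₂ (τ + j - t)| * |κ₂ (τ - i)|) :=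
          Finset.sum_le_sum fun t _ => Finset.sum_le_sum fun τ _ => habs t τ
      _ = (∑ t ∈ T, ∑ τ ∈ U, |κ₄ (i - t) (τ - t) (τ + j - t)|)
            + (∑ t ∈ T, ∑ τ ∈ U, |κ₂ (τ - t)| * |κ₂ (τ + j - i)|)
            + (∑ t ∈ T, ∑ τ ∈ U, |κ₂ (τ + j - t)| * |κ₂ (τ - i)|) := by
          simp only [Finset.sum_add_distrib]
      _ ≤ S₄ + S₂ * S₂ + S₂ * S₂ := add_le_add (add_le_add hsum4 hsum2a) hsum2b
      _ = 2 * S₂ ^ 2 + S₄ := by ring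
  have hn0 : (n : ℝ) ≠ 0 := hnR.ne'
  calc ‖∑ t ∈ T, ∑ τ ∈ U, ((n : ℂ)⁻¹ * (n : ℂ)⁻¹ * e t) * ((c t τ : ℝ) : ℂ)‖
      ≤ ∑ t ∈ T, ‖∑ τ ∈ U, ((n : ℂ)⁻¹ * (n : ℂ)⁻¹ * e t) * ((c t τ : ℝ) : ℂ)‖ :=
        norm_sum_le _ _
    _ ≤ ∑ t ∈ T, ∑ τ ∈ U, ‖((n : ℂ)⁻¹ * (n : ℂ)⁻¹ * e t) * ((c t τ : ℝ) : ℂ)‖ :=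
        Finset.sum_le_sum fun t _ => norm_sum_le _ _
    _ = ∑ t ∈ T, ∑ τ ∈ U, (n : ℝ)⁻¹ * (n : ℝ)⁻¹ * |c t τ| := by
        refine Finset.sum_congr rfl fun t _ => Finset.sum_congr rfl fun τ _ => ?_
        rw [norm_mul, norm_mul, norm_mul, hnorme t]
        simp [Complex.norm_real, Real.norm_eq_abs]
    _ = (n : ℝ)⁻¹ * (n : ℝ)⁻¹ * ∑ t ∈ T, ∑ τ ∈ U, |c t τ| := by
        simp_rw [Finset.mul_sum]
    _ ≤ (n : ℝ)⁻¹ * (n : ℝ)⁻¹ * (2 * S₂ ^ 2 + S₄) := by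
        refine mul_le_mul_of_nonneg_left htotal (by positivity)
    _ = (2 * S₂ ^ 2 + S₄) / n ^ 2 := by
        have h2 : ((n : ℝ)⁻¹ * (n : ℝ)⁻¹) = ((n : ℝ) ^ 2)⁻¹ := by rw [sq, mul_inv]
        rw [h2, div_eq_mul_inv, mul_comm]
end
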